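/- Let R be a semiprime left Goldie ring and σ an endomorphism of R with large image. Then σ is injective if and only if σ maps regular elements of R to regular elements of R. Moreover, in that case σ extends canonically to an automorphism of the classical left quotient ring Q(R). -/

import Mathlib

universe u v

/-- The left annihilator of the set `L` in `S` is zero. -/
def LAnnZero (S : Type u) [Ring S] (L : Set S) : Prop :=
  ∀ a : S, (∀ x ∈ L, a * x = 0) → a = 0

/-- The right annihilator of the set `L` in `S` is zero. -/
def RAnnZero (S : Type u) [Ring S] (L : Set S) : Prop :=
  ∀ a : S, (∀ x ∈ L, x * a = 0) → a = 0

/-- A left ideal is essential: it meets every nonzero left ideal nontrivially. -/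
def IsEssentialLeftIdeal {S : Type u} [Ring S] (L : Ideal S) : Prop :=
  ∀ I : Ideal S, I ≠ ⊥ → L ⊓ I ≠ ⊥

/-- A (possibly noncommutative) ring is semiprime: `aRa = 0` implies `a = 0`. -/
def IsSemiprimeRing (S : Type u) [Ring S] : Prop :=
  ∀ a : S, (∀ r : S, a * r * a = 0) → a = 0

/-- A (possibly noncommutative) ring is prime: it is nonzero and `aRb = 0`
implies `a = 0` or `b = 0`. -/
def IsPrimeRingE (S : Type u) [Ring S] : Prop :=
  Nontrivial S ∧ ∀ a b : S, (∀ r : S, a * r * b = 0) → a = 0 ∨ b = 0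

/-- `a` is left regular: its left annihilator is zero. -/
def LeftReg {S : Type u} [Ring S] (a : S) : Prop := ∀ x : S, x * a = 0 → x = 0

/-- `a` is right regular: its right annihilator is zero. -/
def RightReg {S : Type u} [Ring S] (a : S) : Prop := ∀ x : S, a * x = 0 → x = 0

/-- `a` is regular: neither a left nor a right zero divisor. -/
def Reg {S : Type u} [Ring S] (a : S) : Prop := LeftReg a ∧ RightReg a

/-- A self-map of a ring has large image: its range contains an essential
left ideal with zero right annihilator. -/
def HasLargeImage {S : Type u} [Ring S] (f : S → S) : Prop :=
  ∃ L : Ideal S, IsEssentialLeftIdeal L ∧ RAnnZero S (L : Set S) ∧ (L : Set S) ⊆ Set.range f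

/-- The left annihilator of a set, as a left ideal. -/
def lAnnIdeal (S : Type u) [Ring S] (X : Set S) : Ideal S where
  carrier := {a | ∀ x ∈ X, a * x = 0}
  add_mem' := by intro a b ha hb x hx; rw [add_mul, ha x hx, hb x hx, add_zero]
  zero_mem' := by intro x hx; rw [zero_mul]
  smul_mem' := by intro r a ha x hx; simp only [smul_eq_mul, mul_assoc, ha x hx, mul_zero]

/-- ACC on left annihilator ideals. -/
def AccLeftAnn (S : Type u) [Ring S] : Prop :=
  ∀ X : ℕ → Set S, (∀ n, lAnnIdeal S (X n) ≤ lAnnIdeal S (X (n + 1))) →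
    ∃ N, ∀ m, N ≤ m → lAnnIdeal S (X m) = lAnnIdeal S (X N)

/-- Finite uniform (Goldie) dimension on the left: no infinite independent
family of nonzero left ideals. -/
def FinUdim (S : Type u) [Ring S] : Prop :=
  ¬ ∃ f : ℕ → Ideal S, (∀ n, f n ≠ ⊥) ∧ iSupIndep f

/-- Left Goldie ring: ACC on left annihilators and finite left uniform dimension. -/
def IsLeftGoldie (S : Type u) [Ring S] : Prop := AccLeftAnn S ∧ FinUdim S

/-- The left uniform (Goldie) dimension of `S` is at least `n`. -/
def UdimGE (S : Type u) [Ring S] (n : ℕ) : Prop :=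
  ∃ f : Fin n → Ideal S, (∀ i, f i ≠ ⊥) ∧ iSupIndep f

/-- `ι : R →+* Q` realizes `Q` as a classical left quotient ring of `R`:
`ι` is injective, regular elements become units, and every element of `Q`
is a left fraction `(ι s)⁻¹ * (ι a)` with `s` regular. -/
structure IsLeftQuotRing {R : Type u} {Q : Type v} [Ring R] [Ring Q] (ι : R →+* Q) : Prop where
  inj : Function.Injective ι
  unit : ∀ a : R, Reg a → IsUnit (ι a)
  frac : ∀ q : Q, ∃ a s : R, Reg s ∧ ι s * q = ι a

/-- An ideal (a priori only a left ideal) is two-sided. -/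
def IsTwoSided {S : Type u} [Ring S] (I : Ideal S) : Prop := ∀ x ∈ I, ∀ r : S, x * r ∈ I

/-- ACC on two-sided ideals. -/
def AccTwoSided (S : Type u) [Ring S] : Prop :=
  ∀ f : ℕ → Ideal S, (∀ n, IsTwoSided (f n)) → (∀ n, f n ≤ f (n + 1)) →
    ∃ N, ∀ m, N ≤ m → f m = f N

/-- A trivially ordered set: no strict comparabilities. -/
def TrivOrd (P : Type u) [Preorder P] : Prop := ∀ x y : P, ¬ x < y

/-- `DevLE α P` : the deviation (in the sense of Gabriel–Rentschler) of the
poset `P` is at most `α` (where trivially ordered intervals count as having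
deviation `-∞`). -/
def DevLE (α : Ordinal.{v}) (P : Type u) [Preorder P] : Prop :=
  ∀ f : ℕ → P, (∀ n, f (n + 1) ≤ f n) →
    ∃ N : ℕ, ∀ n, N ≤ n →
      TrivOrd ↥(Set.Icc (f (n + 1)) (f n)) ∨
      ∃ β, ∃ _ : β < α, DevLE β ↥(Set.Icc (f (n + 1)) (f n))
termination_by α

/-- `R` has left Krull dimension in the sense of Gabriel–Rentschler: the
poset of left ideals of `R` has deviation. -/
def HasLeftKrullDim (R : Type u) [Ring R] : Prop :=
  ∃ α : Ordinal.{u}, DevLE α (Ideal R)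

/-- `(A, ι, τ)` is a Cohn–Jordan extension of `(R, σ)`: `ι : R → A` is an
injective embedding, the automorphism `τ` of `A` extends `σ`, and every
element of `A` is mapped into `R` by some positive power of `τ`. -/
structure IsCohnJordan {R A : Type u} [Ring R] [Ring A] (σ : R →+* R) (ι : R →+* A)
    (τ : A ≃+* A) : Prop where
  inj : Function.Injective ι
  comm : ∀ r : R, τ (ι r) = ι (σ r)
  small : ∀ a : A, ∃ n : ℕ, 1 ≤ n ∧ (⇑τ)^[n] a ∈ Set.range ι

namespace SPG

variable {R : Type u} [Ring R]

/-- left annihilator of a single element -/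
def lA (x : R) : Ideal R := lAnnIdeal R {x}

lemma mem_lA {x a : R} : a ∈ lA x ↔ a * x = 0 :=
  ⟨fun h => h x rfl, fun h y hy => by rw [Set.mem_singleton_iff] at hy; rw [hy]; exact h⟩

/-- the left ideal R·a -/
def rMul (a : R) : Ideal R where
  carrier := {x | ∃ r, x = r * a}
  add_mem' := by rintro x y ⟨r, rfl⟩ ⟨s, rfl⟩; exact ⟨r + s, (add_mul r s a).symm⟩
  zero_mem' := ⟨0, (zero_mul a).symm⟩
  smul_mem' := by rintro c x ⟨r, rfl⟩; exact ⟨c * r, by rw [smul_eq_mul, mul_assoc]⟩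

lemma mem_rMul {a x : R} : x ∈ rMul a ↔ ∃ r, x = r * a := Iff.rfl

lemma self_mem_rMul (a : R) : a ∈ rMul a := ⟨1, (one_mul a).symm⟩

/-- right multiplication as an R-linear endomorphism of R -/
def ρ (a : R) : R →ₗ[R] R where
  toFun x := x * a
  map_add' x y := add_mul x y a
  map_smul' r x := by simp only [smul_eq_mul, RingHom.id_apply, mul_assoc]

@[simp] lemma ρ_apply (a x : R) : ρ a x = x * a := rfl

lemma ess_mono {E E' : Ideal R} (h : E ≤ E') (hE : IsEssentialLeftIdeal E) :
    IsEssentialLeftIdeal E' := by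
  intro I hI hc
  exact hE I hI (le_bot_iff.mp (hc ▸ inf_le_inf_right I h))

lemma ess_top : IsEssentialLeftIdeal (⊤ : Ideal R) := by
  intro I hI hc
  exact hI (by rw [top_inf_eq] at hc; exact hc)

lemma ess_inf {E F : Ideal R} (hE : IsEssentialLeftIdeal E) (hF : IsEssentialLeftIdeal F) :
    IsEssentialLeftIdeal (E ⊓ F) := by
  intro I hI
  have h2 : E ⊓ (F ⊓ I) ≠ ⊥ := hE _ (hF I hI)
  simpa [inf_assoc] using h2

lemma eq_bot_of_inf_ess {X E : Ideal R} (hE : IsEssentialLeftIdeal E) (h : E ⊓ X = ⊥) :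
    X = ⊥ := by
  by_contra hX
  exact hE X hX h

lemma ess_comap {E : Ideal R} (hE : IsEssentialLeftIdeal E) (a : R) :
    IsEssentialLeftIdeal (Submodule.comap (ρ a) E) := by
  intro I hI
  by_cases hIa : Submodule.map (ρ a) I = ⊥
  · intro hc
    apply hI
    rw [eq_bot_iff]
    intro x hx
    have hxa : (ρ a) x ∈ Submodule.map (ρ a) I := Submodule.mem_map_of_mem hx
    rw [hIa, Submodule.mem_bot] at hxa
    have hxT : x ∈ Submodule.comap (ρ a) E := by
      show (ρ a) x ∈ E
      rw [hxa]; exact E.zero_mem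
    have : x ∈ Submodule.comap (ρ a) E ⊓ I := ⟨hxT, hx⟩
    rw [hc] at this
    exact this
  · obtain ⟨z, ⟨hzE, hzI⟩, hz0⟩ := (Submodule.ne_bot_iff _).mp (hE _ hIa)
    obtain ⟨i, hiI, hieq⟩ := hzI
    intro hc
    have hi0 : i ≠ 0 := by
      rintro rfl
      apply hz0
      rw [← hieq]
      exact map_zero _
    have : i ∈ Submodule.comap (ρ a) E ⊓ I := ⟨by show (ρ a) i ∈ E; rw [hieq]; exact hzE, hiI⟩
    rw [hc, Submodule.mem_bot] at this
    exact hi0 this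


/-- dependent choice sequence builder -/
lemma dcSeq {α : Type*} (P : α → Prop) (Rel : α → α → Prop) (a0 : α) (h0 : P a0)
    (hstep : ∀ a, P a → ∃ b, P b ∧ Rel a b) :
    ∃ f : ℕ → α, f 0 = a0 ∧ (∀ n, P (f n)) ∧ ∀ n, Rel (f n) (f (n + 1)) := by
  choose g hg1 hg2 using hstep
  let F : ℕ → {x : α // P x} := fun n =>
    Nat.rec ⟨a0, h0⟩ (fun _ p => ⟨g p.1 p.2, hg1 p.1 p.2⟩) n
  exact ⟨fun n => (F n).1, rfl, fun n => (F n).2, fun n => hg2 (F n).1 (F n).2⟩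

/-- existence of maximal left annihilators -/
lemma exists_maxAnn (hacc : AccLeftAnn R) {A : Set R} (hA : A.Nonempty) :
    ∃ a ∈ A, ∀ b ∈ A, lA a ≤ lA b → lA b = lA a := by
  by_contra h
  push_neg at h
  obtain ⟨a0, ha0⟩ := hA
  have hstep : ∀ a : R, a ∈ A → ∃ b : R, b ∈ A ∧ (lA a ≤ lA b ∧ lA a ≠ lA b) := by
    intro a ha
    obtain ⟨b, hbA, hble, hbne⟩ := h a ha
    exact ⟨b, hbA, hble, fun he => hbne he.symm⟩
  obtain ⟨f, -, hfP, hfR⟩ := dcSeq (fun x => x ∈ A) (fun a b => lA a ≤ lA b ∧ lA a ≠ lA b) a0 ha0 hstep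
  obtain ⟨N, hN⟩ := hacc (fun n => {f n}) (fun n => (hfR n).1)
  exact (hfR N).2 (hN (N + 1) (Nat.le_succ N)).symm

/-- a*(r*a)^k = (a*r)^k*a -/
lemma sandwich_pow (a r : R) : ∀ k : ℕ, a * (r * a) ^ k = (a * r) ^ k * a := by
  intro k
  induction k with
  | zero => simp
  | succ k ih =>
    rw [pow_succ, pow_succ, ← mul_assoc, ih]
    simp only [mul_assoc]

/-- no nonzero nil left ideals: every nonzero left ideal contains a non-nilpotent element -/
lemma exists_nonnil (hsp : IsSemiprimeRing R) (hacc : AccLeftAnn R)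
    {J : Ideal R} (hJ : J ≠ ⊥) : ∃ x ∈ J, ∀ n : ℕ, 1 ≤ n → x ^ n ≠ 0 := by
  classical
  by_contra hcon
  push_neg at hcon
  obtain ⟨x0, hx0J, hx00⟩ := (Submodule.ne_bot_iff J).mp hJ
  obtain ⟨a, ⟨haJ, ha0⟩, hamax⟩ :=
    exists_maxAnn hacc (A := {x | x ∈ J ∧ x ≠ 0}) ⟨x0, hx0J, hx00⟩
  have key : ∀ r : R, a * r * a = 0 := by
    intro r
    by_contra hara
    have hra : r * a ∈ J := Ideal.mul_mem_left J r haJ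
    obtain ⟨n0, hn0ge, hn0⟩ := hcon (r * a) hra
    have hQex : ∃ j, a * (r * a) ^ j = 0 := ⟨n0, by rw [hn0, mul_zero]⟩
    set N := Nat.find hQex with hNdef
    have hQN : a * (r * a) ^ N = 0 := Nat.find_spec hQex
    have hN1 : 1 ≤ N := by
      rcases Nat.eq_zero_or_pos N with h | h
      · exfalso; rw [h, pow_zero, mul_one] at hQN; exact ha0 hQN
      · exact h
    obtain ⟨m, hm⟩ : ∃ m, N = m + 1 := ⟨N - 1, (Nat.succ_pred_eq_of_pos hN1).symm⟩
    have hcm : a * (r * a) ^ m ≠ 0 := Nat.find_min hQex (by omega)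
    rcases Nat.eq_zero_or_pos m with hm0 | hmpos
    · apply hara
      rw [hm, hm0, zero_add, pow_one] at hQN
      rw [mul_assoc]; exact hQN
    · set c := a * (r * a) ^ m with hcdef
      have hcJ : c ∈ J := by
        rw [hcdef, sandwich_pow]
        exact Ideal.mul_mem_left J _ haJ
      have hle : lA a ≤ lA c := by
        intro x hx
        rw [mem_lA] at hx ⊢
        rw [hcdef, ← mul_assoc, hx, zero_mul]
      have heq := hamax c ⟨hcJ, hcm⟩ hle
      have harc : (a * r) ∈ lA c := by
        rw [mem_lA, hcdef]
        have : a * r * (a * (r * a) ^ m) = a * (r * a) ^ (m + 1) := by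
          rw [pow_succ']
          simp only [mul_assoc]
        rw [this, ← hm, hQN]
      rw [heq, mem_lA] at harc
      exact hara harc
  exact ha0 (hsp a key)

/-- good elements: ℓ(a²)=ℓ(a) -/
lemma exists_good (hsp : IsSemiprimeRing R) (hacc : AccLeftAnn R)
    {J : Ideal R} (hJ : J ≠ ⊥) :
    ∃ a, a ∈ J ∧ a ≠ 0 ∧ ∀ x : R, x * (a * a) = 0 → x * a = 0 := by
  obtain ⟨x0, hx0J, hx0⟩ := exists_nonnil hsp hacc hJ
  obtain ⟨a, ⟨haJ, hanil⟩, hmax⟩ :=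
    exists_maxAnn hacc (A := {x | x ∈ J ∧ ∀ n : ℕ, 1 ≤ n → x ^ n ≠ 0}) ⟨x0, hx0J, hx0⟩
  have ha0 : a ≠ 0 := by
    intro h
    exact hanil 1 le_rfl (by rw [h, pow_one])
  have haaJ : a * a ∈ J := Ideal.mul_mem_left J a haJ
  have haanil : ∀ n : ℕ, 1 ≤ n → (a * a) ^ n ≠ 0 := by
    intro n hn h
    apply hanil (2 * n) (by omega)
    rw [← pow_two] at h
    rw [pow_mul]
    exact h
  have hle : lA a ≤ lA (a * a) := by
    intro x hx
    rw [mem_lA] at hx ⊢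
    rw [← mul_assoc, hx, zero_mul]
  have heq := hmax (a * a) ⟨haaJ, haanil⟩ hle
  refine ⟨a, haJ, ha0, fun x hx => ?_⟩
  have : x ∈ lA (a * a) := mem_lA.mpr hx
  rw [heq] at this
  exact mem_lA.mp this


end SPG
-- singular ideal & regularity
namespace SPG
variable {R : Type u} [Ring R]

/-- the left singular ideal -/
def singId (R : Type u) [Ring R] : Ideal R where
  carrier := {z | IsEssentialLeftIdeal (lA z)}
  add_mem' := by
    intro a b ha hb
    apply ess_mono _ (ess_inf ha hb)
    intro x hx
    rw [Submodule.mem_inf, mem_lA, mem_lA] at hx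
    rw [mem_lA, mul_add, hx.1, hx.2, add_zero]
  zero_mem' := by
    apply ess_mono _ (ess_top (R := R))
    intro x _
    rw [mem_lA, mul_zero]
  smul_mem' := by
    intro r z hz
    apply ess_mono _ (ess_comap hz r)
    intro x hx
    have hx' : x * r ∈ lA z := hx
    rw [mem_lA] at hx'
    rw [smul_eq_mul, mem_lA, ← mul_assoc, hx']

lemma singular_zero (hsp : IsSemiprimeRing R) (hacc : AccLeftAnn R) :
    ∀ z : R, IsEssentialLeftIdeal (lA z) → z = 0 := by
  have hnil : ∀ w : R, IsEssentialLeftIdeal (lA w) → ∃ n : ℕ, 1 ≤ n ∧ w ^ n = 0 := by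
    intro w hw
    obtain ⟨N, hN⟩ := hacc (fun n => {w ^ (n + 1)}) (fun n => by
      intro x hx
      intro y hy
      rw [Set.mem_singleton_iff] at hy
      subst hy
      have h1 := hx (w ^ (n + 1)) rfl
      rw [pow_succ (n := n + 1), ← mul_assoc, h1, zero_mul])
    have hdisj : rMul (w ^ (N + 1)) ⊓ lA w = ⊥ := by
      rw [eq_bot_iff]
      rintro x ⟨⟨r, rfl⟩, hxw⟩
      have hxw' : r * w ^ (N + 1) * w = 0 := hxw w rfl
      rw [mul_assoc, ← pow_succ] at hxw'
      have : r ∈ lAnnIdeal R {w ^ (N + 1 + 1)} := by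
        intro y hy
        rw [Set.mem_singleton_iff] at hy
        rw [hy]
        exact hxw'
      rw [hN (N + 1) (Nat.le_succ N)] at this
      have h2 : r * w ^ (N + 1) = 0 := this _ rfl
      rw [Submodule.mem_bot]
      exact h2
    have hbot : rMul (w ^ (N + 1)) = ⊥ := by
      by_contra hne
      exact hw _ hne (by rw [inf_comm]; exact hdisj)
    refine ⟨N + 1, by omega, ?_⟩
    have := self_mem_rMul (w ^ (N + 1))
    rw [hbot, Submodule.mem_bot] at this
    exact this
  intro z hz
  by_contra hz0
  have hZne : singId R ≠ ⊥ := (Submodule.ne_bot_iff _).mpr ⟨z, hz, hz0⟩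
  obtain ⟨x, hxZ, hxnil⟩ := exists_nonnil hsp hacc hZne
  obtain ⟨n, hn1, hn0⟩ := hnil x hxZ
  exact hxnil n hn1 hn0

end SPG
namespace SPG
variable {R : Type u} [Ring R]

/-- the left ideal I·cⁿ -/
def mulPow (I : Ideal R) (c : R) (n : ℕ) : Ideal R where
  carrier := {x | ∃ i ∈ I, x = i * c ^ n}
  add_mem' := by
    rintro x y ⟨i, hi, rfl⟩ ⟨j, hj, rfl⟩
    exact ⟨i + j, I.add_mem hi hj, (add_mul _ _ _).symm⟩
  zero_mem' := ⟨0, I.zero_mem, (zero_mul _).symm⟩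
  smul_mem' := by
    rintro r x ⟨i, hi, rfl⟩
    exact ⟨r * i, Ideal.mul_mem_left I r hi, by rw [smul_eq_mul, mul_assoc]⟩

def ssi (I : Ideal R) (c : R) : ℕ → Ideal R
  | 0 => ⊥
  | (n + 1) => I ⊔ Submodule.map (ρ c) (ssi I c n)

lemma mulPow_le_ssi (I : Ideal R) (c : R) : ∀ n m : ℕ, m < n → mulPow I c m ≤ ssi I c n := by
  intro n
  induction n with
  | zero => intro m hm; omega
  | succ n ih =>
    intro m hm
    cases m with
    | zero =>
      rintro x ⟨i, hi, rfl⟩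
      apply Submodule.mem_sup_left
      rw [pow_zero, mul_one]
      exact hi
    | succ m' =>
      rintro x ⟨i, hi, rfl⟩
      apply Submodule.mem_sup_right
      rw [pow_succ, ← mul_assoc]
      exact Submodule.mem_map.mpr ⟨i * c ^ m', ih m' (by omega) ⟨i, hi, rfl⟩, rfl⟩

lemma lb_claim (I : Ideal R) {c : R} (hc : ∀ x : R, x * c = 0 → x = 0)
    (hdisj : ∀ z, z ∈ I → z ∈ rMul c → z = 0) :
    ∀ n : ℕ, ∀ s ∈ ssi I c n, ∀ r i : R, i ∈ I →
      s + r * c ^ (n + 1) = i * c ^ n → i * c ^ n = 0 := by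
  intro n
  induction n with
  | zero =>
    intro s hs r i hi hrel
    rw [show ssi I c 0 = ⊥ from rfl, Submodule.mem_bot] at hs
    subst hs
    rw [zero_add, pow_one, pow_zero, mul_one] at hrel
    rw [pow_zero, mul_one]
    exact hdisj i hi ⟨r, hrel.symm⟩
  | succ n ih =>
    intro s hs r i hi hrel
    rw [show ssi I c (n + 1) = I ⊔ Submodule.map (ρ c) (ssi I c n) from rfl] at hs
    obtain ⟨i0, hi0, w, hw, hsum⟩ := Submodule.mem_sup.mp hs
    obtain ⟨s', hs', rfl⟩ := Submodule.mem_map.mp hw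
    have hrel2 : i0 + s' * c + r * c ^ (n + 2) = i * c ^ (n + 1) := by
      have : (ρ c) s' = s' * c := rfl
      rw [this] at hsum
      rw [← hsum] at hrel
      exact hrel
    have hkey : i0 = (i * c ^ n - s' - r * c ^ (n + 1)) * c := by
      have h1 : (i * c ^ n - s' - r * c ^ (n + 1)) * c
          = i * c ^ (n + 1) - s' * c - r * c ^ (n + 2) := by
        rw [sub_mul, sub_mul, mul_assoc, ← pow_succ, mul_assoc, ← pow_succ]
      rw [h1, ← hrel2]
      abel
    have hi00 : i0 = 0 := hdisj i0 hi0 ⟨_, hkey⟩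
    have h2 : (i * c ^ n - s' - r * c ^ (n + 1)) * c = 0 := by rw [← hkey, hi00]
    have h3 : i * c ^ n - s' - r * c ^ (n + 1) = 0 := hc _ h2
    rw [sub_sub, sub_eq_zero] at h3
    have h5 := ih s' hs' r i hi h3.symm
    rw [pow_succ, ← mul_assoc, h5, zero_mul]

lemma leftReg_rMul_ess (hdim : FinUdim R) {c : R} (hc : LeftReg c) :
    IsEssentialLeftIdeal (rMul c) := by
  intro I hI hdisj0
  apply hdim
  have hdisj : ∀ z, z ∈ I → z ∈ rMul c → z = 0 := fun z h1 h2 => by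
    have : z ∈ rMul c ⊓ I := ⟨h2, h1⟩
    rw [hdisj0, Submodule.mem_bot] at this
    exact this
  have hcpow : ∀ n : ℕ, ∀ x : R, x * c ^ n = 0 → x = 0 := by
    intro n
    induction n with
    | zero => intro x h; rw [pow_zero, mul_one] at h; exact h
    | succ n ih => intro x h; rw [pow_succ, ← mul_assoc] at h; exact ih _ (hc _ h)
  refine ⟨fun n => mulPow I c n, ?_, ?_⟩
  · intro n
    obtain ⟨i, hiI, hi0⟩ := (Submodule.ne_bot_iff I).mp hI
    refine (Submodule.ne_bot_iff _).mpr ⟨i * c ^ n, ⟨i, hiI, rfl⟩, ?_⟩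
    intro h
    exact hi0 (hcpow n i h)
  · intro n
    rw [Submodule.disjoint_def]
    intro x hx hsup
    have hbound : (⨆ m, ⨆ (_ : m ≠ n), mulPow I c m) ≤ ssi I c n ⊔ rMul (c ^ (n + 1)) := by
      apply iSup₂_le
      intro m hm
      rcases Nat.lt_or_ge m n with h | h
      · exact le_trans (mulPow_le_ssi I c n m h) le_sup_left
      · have hgt : n + 1 ≤ m := by omega
        refine le_trans ?_ le_sup_right
        rintro y ⟨i, hi, rfl⟩
        refine ⟨i * c ^ (m - (n + 1)), ?_⟩
        have hm2 : m = (m - (n + 1)) + (n + 1) := by omega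
        rw [mul_assoc, ← pow_add, ← hm2]
    obtain ⟨s, hs, y, hy, hsum⟩ := Submodule.mem_sup.mp (hbound hsup)
    obtain ⟨i, hiI, hxi⟩ := hx
    obtain ⟨r, rfl⟩ := hy
    have hrel : s + r * c ^ (n + 1) = i * c ^ n := by rw [hsum, hxi]
    rw [hxi]
    exact lb_claim I hc hdisj n s hs r i hiI hrel

lemma leftReg_reg (hsp : IsSemiprimeRing R) (hacc : AccLeftAnn R) (hdim : FinUdim R)
    {c : R} (hcl : LeftReg c) : Reg c := by
  refine ⟨hcl, fun x hx => ?_⟩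
  apply singular_zero hsp hacc
  apply ess_mono _ (leftReg_rMul_ess hdim hcl)
  rintro y ⟨r, rfl⟩
  rw [mem_lA, mul_assoc, hx, mul_zero]

end SPG
namespace SPG
variable {R : Type u} [Ring R]

def goodElt (a : R) : Prop := ∀ x : R, x * (a * a) = 0 → x * a = 0

def interAnn (l : List R) : Ideal R := lAnnIdeal R {a | a ∈ l}

lemma peel_sum : ∀ (l : List R), (∀ a ∈ l, goodElt a) →
    l.Pairwise (fun a b => b * a = 0) →
    ∀ x : R, x * l.sum = 0 → ∀ a ∈ l, x * a = 0 := by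
  intro l
  induction l with
  | nil => intro _ _ x _ a ha; exact absurd ha List.not_mem_nil
  | cons a0 rest ih =>
    intro hgood hpw x hx a ha
    rw [List.pairwise_cons] at hpw
    rw [List.sum_cons] at hx
    have hra0 : rest.sum * a0 = 0 := by
      have h1 : rest.sum * a0 = (rest.map (⇑(AddMonoidHom.mulRight a0))).sum :=
        map_list_sum (AddMonoidHom.mulRight a0) rest
      rw [h1]
      apply List.sum_eq_zero
      intro z hz
      obtain ⟨b, hb, rfl⟩ := List.mem_map.mp hz
      exact hpw.1 b hb
    have key : x * (a0 * a0) = 0 := by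
      have h1 : (x * (a0 + rest.sum)) * a0 = x * (a0 * a0) + x * (rest.sum * a0) := by
        rw [mul_add, add_mul, mul_assoc, mul_assoc]
      rw [hra0, mul_zero, add_zero] at h1
      rw [← h1, hx, zero_mul]
    have hxa0 : x * a0 = 0 := hgood a0 List.mem_cons_self x key
    have hxrest : x * rest.sum = 0 := by
      rw [mul_add, hxa0, zero_add] at hx
      exact hx
    rcases List.mem_cons.mp ha with rfl | ha'
    · exact hxa0
    · exact ih (fun b hb => hgood b (List.mem_cons_of_mem _ hb)) hpw.2 x hxrest a ha'

def seg (a : ℕ → R) (k : ℕ) : ℕ → Ideal R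
  | 0 => ⊥
  | (e + 1) => rMul (a (k - (e + 1))) ⊔ seg a k e

lemma seg_le_lA (a : ℕ → R) (k : ℕ) (hkill : ∀ i j, i < j → a j * a i = 0) :
    ∀ e m, m < k - e → seg a k e ≤ lA (a m) := by
  intro e
  induction e with
  | zero => intro m _; exact bot_le
  | succ e ih =>
    intro m hm
    rw [show seg a k (e + 1) = rMul (a (k - (e + 1))) ⊔ seg a k e from rfl]
    apply sup_le
    · rintro x ⟨r, rfl⟩
      rw [mem_lA, mul_assoc, hkill m (k - (e + 1)) (by omega), mul_zero]
    · exact ih m (by omega)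

lemma rMul_le_seg (a : ℕ → R) (k : ℕ) :
    ∀ e j, j < k → k - e ≤ j → rMul (a j) ≤ seg a k e := by
  intro e
  induction e with
  | zero => intro j h1 h2; omega
  | succ e ih =>
    intro j h1 h2
    rw [show seg a k (e + 1) = rMul (a (k - (e + 1))) ⊔ seg a k e from rfl]
    rcases Nat.eq_or_lt_of_le h2 with h | h
    · rw [← h]
      exact le_sup_left
    · exact le_trans (ih j h1 (by omega)) le_sup_right

lemma seg_claim (a : ℕ → R) (k : ℕ) (hgood : ∀ n, goodElt (a n))
    (hkill : ∀ i j, i < j → a j * a i = 0) :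
    ∀ e, e ≤ k → ∀ s ∈ seg a k e, ∀ y : R, (∀ i, i ≤ k → y * a i = 0) →
      ∀ r : R, s + y = r * a k → r * a k = 0 := by
  intro e
  induction e with
  | zero =>
    intro _ s hs y hy r hrel
    rw [show seg a k 0 = ⊥ from rfl, Submodule.mem_bot] at hs
    subst hs
    rw [zero_add] at hrel
    have h1 : (r * a k) * a k = 0 := by rw [← hrel]; exact hy k le_rfl
    rw [mul_assoc] at h1
    exact hgood k r h1
  | succ e ih =>
    intro he s hs y hy r hrel
    rw [show seg a k (e + 1) = rMul (a (k - (e + 1))) ⊔ seg a k e from rfl] at hs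
    obtain ⟨u, hu, s', hs', hsum⟩ := Submodule.mem_sup.mp hs
    obtain ⟨r', rfl⟩ := hu
    have hm'k : k - (e + 1) < k := by omega
    have hs'm : s' * a (k - (e + 1)) = 0 := by
      have := seg_le_lA a k hkill e (k - (e + 1)) (by omega) hs'
      exact mem_lA.mp this
    have hym : y * a (k - (e + 1)) = 0 := hy _ (by omega)
    have hrm : (r * a k) * a (k - (e + 1)) = 0 := by
      rw [mul_assoc, hkill _ _ hm'k, mul_zero]
    have hmain : (r' * a (k - (e + 1))) * a (k - (e + 1)) = 0 := by
      have h0 : (r' * a (k - (e + 1)) + s' + y) * a (k - (e + 1)) = 0 := by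
        have : r' * a (k - (e + 1)) + s' + y = r * a k := by rw [hsum]; exact hrel
        rw [this, hrm]
      rw [add_mul, add_mul, hs'm, add_zero, hym, add_zero] at h0
      exact h0
    rw [mul_assoc] at hmain
    have hr'0 : r' * a (k - (e + 1)) = 0 := hgood _ r' hmain
    have hrel2 : s' + y = r * a k := by
      rw [← hrel, ← hsum, hr'0, zero_add]
    exact ih (by omega) s' hs' y hy r hrel2

lemma ess_exists_leftReg (hsp : IsSemiprimeRing R) (hacc : AccLeftAnn R) (hdim : FinUdim R)
    {E : Ideal R} (hE : IsEssentialLeftIdeal E) : ∃ a ∈ E, LeftReg a := by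
  by_contra hcon
  push_neg at hcon
  apply hdim
  have hstep : ∀ l : List R,
      ((∀ b ∈ l, b ∈ E ∧ b ≠ 0 ∧ goodElt b) ∧ l.Pairwise (fun a b => b * a = 0)) →
      ∃ l', ((∀ b ∈ l', b ∈ E ∧ b ≠ 0 ∧ goodElt b) ∧ l'.Pairwise (fun a b => b * a = 0)) ∧
        ∃ a, l' = l ++ [a] := by
    intro l hl
    have hJ : E ⊓ interAnn l ≠ ⊥ := by
      intro hJbot
      have hsE : l.sum ∈ E := list_sum_mem (fun b hb => (hl.1 b hb).1)
      have hLR : LeftReg l.sum := by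
        intro x hx
        have hall : ∀ b ∈ l, x * b = 0 := peel_sum l (fun b hb => (hl.1 b hb).2.2) hl.2 x hx
        have hxI : x ∈ interAnn l := hall
        have hIbot : interAnn l = ⊥ := eq_bot_of_inf_ess hE hJbot
        rw [hIbot, Submodule.mem_bot] at hxI
        exact hxI
      exact hcon l.sum hsE hLR
    obtain ⟨a, haJ, ha0, hagood⟩ := exists_good hsp hacc hJ
    refine ⟨l ++ [a], ⟨?_, ?_⟩, a, rfl⟩
    · intro b hb
      rcases List.mem_append.mp hb with h | h
      · exact hl.1 b h
      · rw [List.mem_singleton] at h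
        subst h
        exact ⟨(Submodule.mem_inf.mp haJ).1, ha0, hagood⟩
    · rw [List.pairwise_append]
      refine ⟨hl.2, List.pairwise_singleton _ _, ?_⟩
      intro b hb a' ha'
      rw [List.mem_singleton] at ha'
      subst ha'
      exact (Submodule.mem_inf.mp haJ).2 b hb
  obtain ⟨F, hF0, hFP, hFR⟩ := dcSeq _ (fun l l' => ∃ a, l' = l ++ [a]) []
    ⟨by intro b hb; exact absurd hb List.not_mem_nil, List.Pairwise.nil⟩ hstep
  have hlen : ∀ n, (F n).length = n := by
    intro n
    induction n with
    | zero => rw [hF0]; rfl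
    | succ n ih =>
      obtain ⟨b, hb⟩ := hFR n
      rw [hb, List.length_append, ih]
      rfl
  set a : ℕ → R := fun n => (F (n + 1)).getD n 0 with ha_def
  have hstable : ∀ m n, n < m → (F m).getD n 0 = a n := by
    intro m
    induction m with
    | zero => intro n hn; omega
    | succ m ih =>
      intro n hn
      rcases Nat.lt_or_ge n m with h | h
      · obtain ⟨b, hb⟩ := hFR m
        rw [hb, List.getD_append _ _ _ _ (by rw [hlen]; exact h)]
        exact ih n h
      · have hnm : n = m := by omega
        subst hnm
        rfl
  have hmem : ∀ n, a n ∈ F (n + 1) := by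
    intro n
    have h : n < (F (n + 1)).length := by rw [hlen]; omega
    show (F (n + 1)).getD n 0 ∈ F (n + 1)
    rw [List.getD_eq_getElem _ _ h]
    exact List.getElem_mem h
  have hInv : ∀ n, a n ∈ E ∧ a n ≠ 0 ∧ goodElt (a n) := fun n => (hFP (n + 1)).1 _ (hmem n)
  have hkill : ∀ i j, i < j → a j * a i = 0 := by
    intro i j hij
    have hpw := (hFP (j + 1)).2
    rw [List.pairwise_iff_get] at hpw
    have hi : i < (F (j + 1)).length := by rw [hlen]; omega
    have hj : j < (F (j + 1)).length := by rw [hlen]; omega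
    have h := hpw ⟨i, hi⟩ ⟨j, hj⟩ hij
    have hgi : (F (j + 1)).get ⟨i, hi⟩ = a i := by
      rw [List.get_eq_getElem, ← List.getD_eq_getElem _ 0, hstable (j + 1) i (by omega)]
    have hgj : (F (j + 1)).get ⟨j, hj⟩ = a j := by
      rw [List.get_eq_getElem, ← List.getD_eq_getElem _ 0, hstable (j + 1) j (by omega)]
    rw [hgi, hgj] at h
    exact h
  refine ⟨fun n => rMul (a n), ?_, ?_⟩
  · intro n
    exact (Submodule.ne_bot_iff _).mpr ⟨a n, self_mem_rMul _, (hInv n).2.1⟩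
  · intro k
    rw [Submodule.disjoint_def]
    intro x hx hsup
    have hbound : (⨆ j, ⨆ (_ : j ≠ k), rMul (a j)) ≤
        seg a k k ⊔ lAnnIdeal R {b | ∃ i, i ≤ k ∧ b = a i} := by
      apply iSup₂_le
      intro j hj
      rcases Nat.lt_or_ge j k with h | h
      · exact le_trans (rMul_le_seg a k k j h (by omega)) le_sup_left
      · have hjk : k < j := by omega
        refine le_trans ?_ le_sup_right
        rintro y ⟨r, rfl⟩
        rintro b ⟨i, hi, rfl⟩
        rw [mul_assoc, hkill i j (by omega), mul_zero]
    obtain ⟨s, hs, y, hy, hsum⟩ := Submodule.mem_sup.mp (hbound hsup)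
    obtain ⟨r, rfl⟩ := hx
    have hrel : s + y = r * a k := hsum
    have hy' : ∀ i, i ≤ k → y * a i = 0 := fun i hi => hy (a i) ⟨i, hi, rfl⟩
    exact seg_claim a k (fun n => (hInv n).2.2) hkill k le_rfl s hs y hy' r hrel

end SPG
namespace SPG
variable {R : Type u} [Ring R]

def kerId (σ : R →+* R) : Ideal R where
  carrier := {x | σ x = 0}
  add_mem' := by intro a b ha hb; show σ (a + b) = 0; rw [map_add, ha, hb, add_zero]
  zero_mem' := map_zero σ
  smul_mem' := by intro r x hx; show σ (r • x) = 0; rw [smul_eq_mul, map_mul, hx, mul_zero]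

def comapId (σ : R →+* R) (W : Ideal R) : Ideal R where
  carrier := {x | σ x ∈ W}
  add_mem' := by intro a b ha hb; show σ (a + b) ∈ W; rw [map_add]; exact W.add_mem ha hb
  zero_mem' := by show σ 0 ∈ W; rw [map_zero]; exact W.zero_mem
  smul_mem' := by
    intro r x hx
    show σ (r • x) ∈ W
    rw [smul_eq_mul, map_mul]
    exact Ideal.mul_mem_left W _ hx

lemma mem_comapId {σ : R →+* R} {W : Ideal R} {x : R} : x ∈ comapId σ W ↔ σ x ∈ W := Iff.rfl

def zfam (σ : R →+* R) (B L K : Ideal R) : ℕ → Ideal R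
  | 0 => K
  | (t + 1) => B ⊓ comapId σ (L ⊓ zfam σ B L K t)

lemma injective_of_pres (hsp : IsSemiprimeRing R) (hg : IsLeftGoldie R) (σ : R →+* R)
    (hli : HasLargeImage ⇑σ) (hpres : ∀ a : R, Reg a → Reg (σ a)) :
    Function.Injective ⇑σ := by
  obtain ⟨hacc, hdim⟩ := hg
  obtain ⟨L, hLess, hLrann, hLrange⟩ := hli
  have hker : ∀ x : R, σ x = 0 → x = 0 := by
    by_contra hcon
    push_neg at hcon
    obtain ⟨x0, hx0σ, hx00⟩ := hcon
    set K := kerId σ with hK_def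
    have hK : K ≠ ⊥ := (Submodule.ne_bot_iff K).mpr ⟨x0, hx0σ, hx00⟩
    set B := lAnnIdeal R {k : R | σ k = 0} with hB_def
    have hBmem : ∀ b, b ∈ B → ∀ k : R, σ k = 0 → b * k = 0 := fun b hb k hk => hb k hk
    have hBmem' : ∀ b : R, (∀ k : R, σ k = 0 → b * k = 0) → b ∈ B := fun b hb k hk => hb k hk
    have hBr : ∀ b ∈ B, ∀ v : R, b * v ∈ B := by
      intro b hb v
      apply hBmem'
      intro k hk
      rw [mul_assoc]
      exact hBmem b hb (v * k) (by rw [map_mul, hk, mul_zero])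
    have hrl : ∀ z : R, (∀ k : R, σ k = 0 → k * z = 0) → z ∈ B := by
      intro z hz
      apply hBmem'
      intro k hk
      apply hsp
      intro r
      have h1 : (k * r) * z = 0 := hz (k * r) (by rw [map_mul, hk, zero_mul])
      calc z * k * r * (z * k) = z * (((k * r) * z) * k) := by simp only [mul_assoc]
        _ = 0 := by rw [h1, zero_mul, mul_zero]
    have hKB : ∀ z : R, σ z = 0 → z ∈ B → z = 0 := by
      intro z h1 h2
      apply hsp
      intro r
      have h3 : σ (r * z) = 0 := by rw [map_mul, h1, mul_zero]
      have h4 := hBmem z h2 (r * z) h3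
      rw [← mul_assoc] at h4
      exact h4
    by_cases hKbar : ∀ v : R, (∀ b ∈ B, b * v = 0) → σ v = 0
    · -- main case: build an infinite independent family
      apply hdim
      have hstar : ∀ W : Ideal R, W ≤ L → W ≠ ⊥ → ∃ b, b ∈ B ∧ b ≠ 0 ∧ σ b ∈ W := by
        intro W hWL hW
        obtain ⟨w, hwW, hw0⟩ := (Submodule.ne_bot_iff W).mp hW
        obtain ⟨v, hv⟩ := hLrange (hWL hwW)
        by_cases hBv : ∀ b ∈ B, b * v = 0
        · exfalso
          apply hw0
          rw [← hv]
          exact hKbar v hBv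
        · push_neg at hBv
          obtain ⟨b, hbB, hbv⟩ := hBv
          refine ⟨b * v, hBr b hbB v, hbv, ?_⟩
          rw [map_mul, hv]
          exact Ideal.mul_mem_left W (σ b) hwW
      set Z := zfam σ B L K with hZ_def
      have hZS : ∀ t, Z (t + 1) = B ⊓ comapId σ (L ⊓ Z t) := fun t => rfl
      have hZne : ∀ t, Z t ≠ ⊥ := by
        intro t
        induction t with
        | zero => exact hK
        | succ t ih =>
          obtain ⟨b, hbB, hb0, hbW⟩ := hstar (L ⊓ Z t) inf_le_left (hLess _ ih)
          exact (Submodule.ne_bot_iff _).mpr ⟨b, ⟨hbB, hbW⟩, hb0⟩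
      refine ⟨Z, hZne, ?_⟩
      intro t
      induction t with
      | zero =>
        rw [Submodule.disjoint_def]
        intro z hz0 hzsup
        have hsup_le : (⨆ s, ⨆ (_ : s ≠ 0), Z s) ≤ B := by
          apply iSup₂_le
          intro s hs
          obtain ⟨s', rfl⟩ := Nat.exists_eq_succ_of_ne_zero hs
          rw [hZS s']
          exact inf_le_left
        exact hKB z hz0 (hsup_le hzsup)
      | succ t ih =>
        rw [Submodule.disjoint_def]
        intro z hzZ hzsup
        have hz2 := Submodule.mem_inf.mp hzZ
        have hσzL : σ z ∈ L ⊓ Z t := mem_comapId.mp hz2.2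
        have hsup_le : (⨆ s, ⨆ (_ : s ≠ t + 1), Z s) ≤ comapId σ (⨆ s, ⨆ (_ : s ≠ t), Z s) := by
          apply iSup₂_le
          intro s hs
          cases s with
          | zero =>
            intro z' hz'
            apply mem_comapId.mpr
            have hz'0 : σ z' = 0 := hz'
            rw [hz'0]
            exact Submodule.zero_mem _
          | succ s' =>
            have hs' : s' ≠ t := by omega
            intro z' hz'
            apply mem_comapId.mpr
            have h5 : σ z' ∈ L ⊓ Z s' := mem_comapId.mp (Submodule.mem_inf.mp hz').2
            exact le_iSup₂ (f := fun (s : ℕ) (_ : s ≠ t) => Z s) s' hs' ((Submodule.mem_inf.mp h5).2)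
        have hσz2 : σ z ∈ ⨆ s, ⨆ (_ : s ≠ t), Z s := mem_comapId.mp (hsup_le hzsup)
        have hσz0 : σ z = 0 :=
          Submodule.disjoint_def.mp ih (σ z) (Submodule.mem_inf.mp hσzL).2 hσz2
        exact hKB z hσz0 hz2.1
    · -- annihilator case
      push_neg at hKbar
      obtain ⟨v, hvB, hvσ⟩ := hKbar
      have hEss : IsEssentialLeftIdeal (K ⊔ B) := by
        intro I hI hc
        have hIB : I ≤ B := by
          intro z hz
          apply hrl
          intro k hk
          have h1 : k * z ∈ I := Ideal.mul_mem_left I k hz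
          have h2 : k * z ∈ K := show σ (k * z) = 0 by rw [map_mul, hk, zero_mul]
          have h3 : k * z ∈ (K ⊔ B) ⊓ I := ⟨Submodule.mem_sup_left h2, h1⟩
          rw [hc, Submodule.mem_bot] at h3
          exact h3
        apply hI
        rw [eq_bot_iff]
        intro z hz
        have h3 : z ∈ (K ⊔ B) ⊓ I := ⟨Submodule.mem_sup_right (hIB hz), hz⟩
        rw [hc] at h3
        exact h3
      obtain ⟨c, hcE, hcL⟩ := ess_exists_leftReg hsp hacc hdim hEss
      have hcreg : Reg c := leftReg_reg hsp hacc hdim hcL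
      obtain ⟨k, hk, b, hb, hkb⟩ := Submodule.mem_sup.mp hcE
      have hcv : σ c * σ v = 0 := by
        have hbv : b * v = 0 := hvB b hb
        have hkK : σ k = 0 := hk
        have h6 : σ (c * v) = 0 := by
          rw [← hkb, add_mul, hbv, add_zero, map_mul, hkK, zero_mul]
        rw [map_mul] at h6
        exact h6
      exact hvσ ((hpres c hcreg).2 (σ v) hcv)
  intro x y hxy
  have h1 : σ (x - y) = 0 := by rw [map_sub, hxy, sub_self]
  exact sub_eq_zero.mp (hker _ h1)

end SPG
namespace SPG
variable {R : Type u} [Ring R]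

lemma reg_one : Reg (1 : R) :=
  ⟨fun x hx => by rwa [mul_one] at hx, fun x hx => by rwa [one_mul] at hx⟩

lemma reg_mul {a b : R} (ha : Reg a) (hb : Reg b) : Reg (a * b) := by
  constructor
  · intro x hx
    rw [← mul_assoc] at hx
    exact ha.1 x (hb.1 (x * a) hx)
  · intro x hx
    rw [mul_assoc] at hx
    exact hb.2 x (ha.2 (b * x) hx)

lemma pres_of_injective (hsp : IsSemiprimeRing R) (hg : IsLeftGoldie R) (σ : R →+* R)
    (hli : HasLargeImage ⇑σ) (hinj : Function.Injective ⇑σ) :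
    ∀ a : R, Reg a → Reg (σ a) := by
  obtain ⟨hacc, hdim⟩ := hg
  obtain ⟨L, hLess, hLrann, hLrange⟩ := hli
  intro a ha
  apply leftReg_reg hsp hacc hdim
  intro x hx
  by_contra hx0
  have hRx : rMul x ≠ ⊥ := (Submodule.ne_bot_iff _).mpr ⟨x, self_mem_rMul x, hx0⟩
  obtain ⟨z, hz, hz0⟩ := (Submodule.ne_bot_iff _).mp (hLess (rMul x) hRx)
  obtain ⟨hzL, hzRx⟩ := Submodule.mem_inf.mp hz
  obtain ⟨v, hv⟩ := hLrange hzL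
  obtain ⟨r, hr⟩ := hzRx
  have hza : z * σ a = 0 := by rw [hr, mul_assoc, hx, mul_zero]
  have hσva : σ (v * a) = 0 := by rw [map_mul, hv, hza]
  have hva : v * a = 0 := hinj (by rw [hσva, map_zero])
  have hv0 : v = 0 := ha.1 v hva
  apply hz0
  rw [← hv, hv0, map_zero]

lemma extendAuto (hsp : IsSemiprimeRing R) (hg : IsLeftGoldie R) (σ : R →+* R)
    (hli : HasLargeImage ⇑σ) (hinj : Function.Injective ⇑σ)
    (hpres : ∀ a : R, Reg a → Reg (σ a))
    (Q : Type v) [Ring Q] (ι : R →+* Q) (hQ : IsLeftQuotRing ι) :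
    ∃ τ : Q ≃+* Q, ∀ r : R, τ (ι r) = ι (σ r) := by
  classical
  obtain ⟨hacc, hdim⟩ := hg
  obtain ⟨L, hLess, hLrann, hLrange⟩ := hli
  have huσ : ∀ s : R, Reg s → IsUnit (ι (σ s)) := fun s hs => hQ.unit _ (hpres s hs)
  have ore : ∀ a s : R, Reg s → ∃ t b : R, Reg t ∧ t * a = b * s := by
    intro a s hs
    have hu := hQ.unit s hs
    obtain ⟨b, t, ht, hfrac⟩ := hQ.frac (ι a * ↑hu.unit⁻¹)
    refine ⟨t, b, ht, hQ.inj ?_⟩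
    rw [map_mul, map_mul]
    calc ι t * ι a = ι t * ι a * ↑hu.unit⁻¹ * ↑hu.unit := by
          rw [Units.inv_mul_cancel_right]
      _ = (ι t * (ι a * ↑hu.unit⁻¹)) * ↑hu.unit := by rw [mul_assoc (ι t)]
      _ = ι b * ↑hu.unit := by rw [hfrac]
      _ = ι b * ι s := by rw [IsUnit.unit_spec]
  choose num den hreg hrel using hQ.frac
  set Φ : Q → Q := fun q => ↑(huσ (den q) (hreg q)).unit⁻¹ * ι (σ (num q)) with hΦ_def
  have hΦ0 : ∀ q, ι (σ (den q)) * Φ q = ι (σ (num q)) := by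
    intro q
    rw [hΦ_def]
    calc ι (σ (den q)) * (↑(huσ (den q) (hreg q)).unit⁻¹ * ι (σ (num q)))
        = (↑(huσ (den q) (hreg q)).unit * ↑(huσ (den q) (hreg q)).unit⁻¹) * ι (σ (num q)) := by
          rw [IsUnit.unit_spec, mul_assoc]
      _ = ι (σ (num q)) := by rw [Units.mul_inv, one_mul]
  have hW : ∀ (q : Q) (a s : R), Reg s → ι s * q = ι a → ι (σ s) * Φ q = ι (σ a) := by
    intro q a s hs hrel2
    obtain ⟨t, b, ht, hts⟩ := ore s (den q) (hreg q)
    have h1 : ι (t * s) * q = ι (t * a) := by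
      rw [map_mul, mul_assoc, hrel2, ← map_mul]
    have h2 : ι (t * s) * q = ι (b * num q) := by
      rw [hts, map_mul, mul_assoc, hrel q, ← map_mul]
    have h3 : t * a = b * num q := hQ.inj (h1.symm.trans h2)
    have h4 : ι (σ t) * (ι (σ s) * Φ q) = ι (σ t) * ι (σ a) := by
      calc ι (σ t) * (ι (σ s) * Φ q) = ι (σ (t * s)) * Φ q := by
            rw [map_mul, map_mul, mul_assoc]
        _ = ι (σ b) * (ι (σ (den q)) * Φ q) := by
            rw [hts, map_mul, map_mul, mul_assoc]
        _ = ι (σ b) * ι (σ (num q)) := by rw [hΦ0]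
        _ = ι (σ (b * num q)) := by rw [map_mul, map_mul]
        _ = ι (σ (t * a)) := by rw [h3]
        _ = ι (σ t) * ι (σ a) := by rw [map_mul, map_mul]
    exact (huσ t ht).mul_left_cancel h4
  have hone : Φ 1 = 1 := by
    have h := hW 1 1 1 reg_one (by rw [map_one, mul_one])
    rw [map_one, map_one, one_mul] at h
    exact h
  have hadd : ∀ x y : Q, Φ (x + y) = Φ x + Φ y := by
    intro x y
    obtain ⟨t, b, ht, hts⟩ := ore (den y) (den x) (hreg x)
    have hsreg : Reg (t * den y) := reg_mul ht (hreg y)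
    have h1 : ι (t * den y) * (x + y) = ι (b * num x + t * num y) := by
      rw [mul_add]
      have e1 : ι (t * den y) * x = ι (b * num x) := by
        rw [hts, map_mul, mul_assoc, hrel x, ← map_mul]
      have e2 : ι (t * den y) * y = ι (t * num y) := by
        rw [map_mul, mul_assoc, hrel y, ← map_mul]
      rw [e1, e2, map_add]
    have h2 := hW (x + y) _ _ hsreg h1
    have h3 : ι (σ (t * den y)) * (Φ x + Φ y) = ι (σ (b * num x + t * num y)) := by
      rw [mul_add]
      have e1 : ι (σ (t * den y)) * Φ x = ι (σ (b * num x)) := by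
        rw [hts, map_mul, map_mul, mul_assoc, hΦ0 x, ← map_mul, ← map_mul]
      have e2 : ι (σ (t * den y)) * Φ y = ι (σ (t * num y)) := by
        rw [map_mul, map_mul, mul_assoc, hΦ0 y, ← map_mul, ← map_mul]
      rw [e1, e2, map_add, map_add]
    exact (huσ _ hsreg).mul_left_cancel (h2.trans h3.symm)
  have hmul : ∀ x y : Q, Φ (x * y) = Φ x * Φ y := by
    intro x y
    obtain ⟨t, b, ht, hta⟩ := ore (num x) (den y) (hreg y)
    have hsreg : Reg (t * den x) := reg_mul ht (hreg x)
    have h1 : ι (t * den x) * (x * y) = ι (b * num y) := by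
      calc ι (t * den x) * (x * y) = ι t * ((ι (den x) * x) * y) := by
            simp only [map_mul, mul_assoc]
        _ = ι t * (ι (num x) * y) := by rw [hrel x]
        _ = ι (t * num x) * y := by simp only [map_mul, mul_assoc]
        _ = ι (b * den y) * y := by rw [hta]
        _ = ι b * (ι (den y) * y) := by simp only [map_mul, mul_assoc]
        _ = ι b * ι (num y) := by rw [hrel y]
        _ = ι (b * num y) := by rw [map_mul]
    have h2 := hW (x * y) _ _ hsreg h1
    have h3 : ι (σ (t * den x)) * (Φ x * Φ y) = ι (σ (b * num y)) := by
      calc ι (σ (t * den x)) * (Φ x * Φ y)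
          = ι (σ t) * ((ι (σ (den x)) * Φ x) * Φ y) := by simp only [map_mul, mul_assoc]
        _ = ι (σ t) * (ι (σ (num x)) * Φ y) := by rw [hΦ0 x]
        _ = ι (σ (t * num x)) * Φ y := by simp only [map_mul, mul_assoc]
        _ = ι (σ (b * den y)) * Φ y := by rw [hta]
        _ = ι (σ b) * (ι (σ (den y)) * Φ y) := by simp only [map_mul, mul_assoc]
        _ = ι (σ b) * ι (σ (num y)) := by rw [hΦ0 y]
        _ = ι (σ (b * num y)) := by rw [map_mul, map_mul]
    exact (huσ _ hsreg).mul_left_cancel (h2.trans h3.symm)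
  have hzero : Φ 0 = 0 := by
    have h := hadd 0 0
    rw [add_zero] at h
    exact (add_eq_right.mp h.symm)
  let Φh : Q →+* Q :=
    { toFun := Φ, map_one' := hone, map_mul' := hmul, map_zero' := hzero, map_add' := hadd }
  have hΦh : ∀ q, Φh q = Φ q := fun q => rfl
  have hcomm : ∀ r : R, Φ (ι r) = ι (σ r) := by
    intro r
    have h := hW (ι r) r 1 reg_one (by rw [map_one, one_mul])
    rw [map_one, map_one, one_mul] at h
    exact h
  have hinjΦ : Function.Injective Φh := by
    intro x y hxy
    have h0 : Φ (x - y) = 0 := by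
      have h := map_sub Φh x y
      have hxy' : Φ x = Φ y := hxy
      rw [hΦh] at h
      rw [h]
      show Φ x - Φ y = 0
      rw [hxy', sub_self]
    have h1 : ι (σ (num (x - y))) = 0 := by
      rw [← hΦ0 (x - y), h0, mul_zero]
    have h2 : num (x - y) = 0 := by
      apply hinj
      rw [map_zero]
      exact hQ.inj (by rw [h1, map_zero])
    have h3 : ι (den (x - y)) * (x - y) = 0 := by
      rw [hrel (x - y), h2, map_zero]
    have h4 : x - y = 0 :=
      (hQ.unit _ (hreg (x - y))).mul_left_cancel (h3.trans (mul_zero _).symm)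
    exact sub_eq_zero.mp h4
  have hsurjΦ : Function.Surjective Φh := by
    intro q
    have hT : IsEssentialLeftIdeal
        (Submodule.comap (ρ (den q)) L ⊓ Submodule.comap (ρ (num q)) L) :=
      ess_inf (ess_comap hLess (den q)) (ess_comap hLess (num q))
    obtain ⟨t, htT, htL⟩ := ess_exists_leftReg hsp hacc hdim hT
    have htreg : Reg t := leftReg_reg hsp hacc hdim htL
    obtain ⟨hts, hta⟩ := Submodule.mem_inf.mp htT
    have hts' : t * den q ∈ L := hts
    have hta' : t * num q ∈ L := hta
    obtain ⟨s0, hs0⟩ := hLrange hts'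
    obtain ⟨a0, ha0⟩ := hLrange hta'
    have hs1reg : Reg (t * den q) := reg_mul htreg (hreg q)
    have hs0reg : Reg s0 := by
      apply leftReg_reg hsp hacc hdim
      intro x hx
      apply hinj
      rw [map_zero]
      have h5 : σ (x * s0) = 0 := by rw [hx, map_zero]
      rw [map_mul, hs0] at h5
      exact hs1reg.1 (σ x) h5
    have hu0 := hQ.unit s0 hs0reg
    refine ⟨↑hu0.unit⁻¹ * ι a0, ?_⟩
    have hrel0 : ι s0 * (↑hu0.unit⁻¹ * ι a0) = ι a0 := by
      calc ι s0 * (↑hu0.unit⁻¹ * ι a0) = (↑hu0.unit * ↑hu0.unit⁻¹) * ι a0 := by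
            rw [IsUnit.unit_spec, mul_assoc]
        _ = ι a0 := by rw [Units.mul_inv, one_mul]
    have h5 : ι (σ s0) * Φ (↑hu0.unit⁻¹ * ι a0) = ι (σ a0) := hW _ a0 s0 hs0reg hrel0
    rw [hs0, ha0] at h5
    have h6 : ι (t * den q) * q = ι (t * num q) := by
      rw [map_mul, mul_assoc, hrel q, ← map_mul]
    exact (hQ.unit _ hs1reg).mul_left_cancel (h5.trans h6.symm)
  refine ⟨RingEquiv.ofBijective Φh ⟨hinjΦ, hsurjΦ⟩, ?_⟩
  intro r
  show Φh (ι r) = ι (σ r)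
  exact hcomm r

end SPG


/-- For a semiprime left Goldie ring `R` and an endomorphism `σ` with large
image: `σ` is injective iff it maps regular elements to regular elements;
and in that case `σ` extends to an automorphism of the classical left
quotient ring of `R`. -/
theorem stmt12 {R : Type u} [Ring R] (hsp : IsSemiprimeRing R) (hg : IsLeftGoldie R)
    (σ : R →+* R) (hli : HasLargeImage ⇑σ) :
    (Function.Injective σ ↔ ∀ a : R, Reg a → Reg (σ a)) ∧
    (Function.Injective σ →
      ∀ (Q : Type v) [Ring Q] (ι : R →+* Q), IsLeftQuotRing ι →
        ∃ τ : Q ≃+* Q, ∀ r : R, τ (ι r) = ι (σ r)) := by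
  constructor
  · exact ⟨fun h => SPG.pres_of_injective hsp hg σ hli h,
      fun h => SPG.injective_of_pres hsp hg σ hli h⟩
  · intro hinj Q _ ι hQ
    exact SPG.extendAuto hsp hg σ hli hinj (SPG.pres_of_injective hsp hg σ hli hinj) Q ι hQ
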